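/- Let G be a graph of order n with no isolated vertex. Then γ^t_StR(G) = γ_t(G) if and only if G is a disjoint union of copies of K₂. -/
import Mathlib


open Finset

variable {V : Type*} [Fintype V]

/-- The degree of a vertex. -/
noncomputable def degN (G : SimpleGraph V) (v : V) : ℕ := {u | G.Adj v u}.ncard

/-- Maximum degree. -/
noncomputable def maxDeg (G : SimpleGraph V) : ℕ := Finset.univ.sup (degN G)

/-- Minimum degree. -/
noncomputable def minDeg (G : SimpleGraph V) : ℕ := sInf {d | ∃ v, degN G v = d}

/-- No isolated vertex. -/
def NoIsolated (G : SimpleGraph V) : Prop := ∀ v, ∃ u, G.Adj v u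

/-- Total strong Roman dominating function. `(Δ+1)/2 = ⌈Δ/2⌉` and
`(m+1)/2 = ⌈m/2⌉` in natural-number arithmetic. -/
def IsTSRDF (G : SimpleGraph V) (f : V → ℕ) : Prop :=
  (∀ v, f v ≤ (maxDeg G + 1) / 2 + 1) ∧
  (∀ v, f v = 0 → ∃ u, G.Adj v u ∧
      1 + ({w | G.Adj u w ∧ f w = 0}.ncard + 1) / 2 ≤ f u) ∧
  (∀ v, 0 < f v → ∃ u, G.Adj v u ∧ 0 < f u)

/-- The total strong Roman domination number. -/
noncomputable def tsrd (G : SimpleGraph V) : ℕ :=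
  sInf {k | ∃ f : V → ℕ, IsTSRDF G f ∧ ∑ v, f v = k}

/-- Total dominating set. -/
def IsTDS (G : SimpleGraph V) (S : Finset V) : Prop := ∀ v, ∃ u ∈ S, G.Adj v u

/-- Total domination number. -/
noncomputable def td (G : SimpleGraph V) : ℕ :=
  sInf {k | ∃ S : Finset V, IsTDS G S ∧ S.card = k}


section Aux

variable {V : Type*} [Fintype V]

private lemma deg_one_unique {G : SimpleGraph V} {v a b : V} (h : degN G v = 1)
    (ha : G.Adj v a) (hb : G.Adj v b) : a = b := by
  obtain ⟨x, hx⟩ := Set.ncard_eq_one.mp h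
  have h1 : a ∈ {u | G.Adj v u} := ha
  have h2 : b ∈ {u | G.Adj v u} := hb
  rw [hx] at h1 h2
  simp only [Set.mem_singleton_iff] at h1 h2
  rw [h1, h2]

private lemma one_le_degN {G : SimpleGraph V} (hni : NoIsolated G) (v : V) :
    1 ≤ degN G v := by
  obtain ⟨u, hu⟩ := hni v
  exact (Set.ncard_pos (Set.toFinite _)).mpr ⟨u, hu⟩

private lemma tsrdf_one {G : SimpleGraph V} (hni : NoIsolated G) :
    IsTSRDF G (fun _ => 1) := by
  refine ⟨fun v => le_add_self, fun v hv => by simp at hv, fun v _ => ?_⟩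
  obtain ⟨u, hu⟩ := hni v
  exact ⟨u, hu, one_pos⟩

private lemma tsrd_set_nonempty {G : SimpleGraph V} (hni : NoIsolated G) :
    {k | ∃ f : V → ℕ, IsTSRDF G f ∧ ∑ v, f v = k}.Nonempty :=
  ⟨∑ v : V, (1 : ℕ), fun _ => 1, tsrdf_one hni, rfl⟩

private lemma td_le_card {G : SimpleGraph V} {S : Finset V} (hS : IsTDS G S) :
    td G ≤ S.card := Nat.sInf_le ⟨S, hS, rfl⟩

/-- If some vertex is not the unique neighbor of anybody, we can drop it from univ. -/
private lemma exists_droppable {G : SimpleGraph V} {v a b : V}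
    (hva : G.Adj v a) (hvb : G.Adj v b) (hab : a ≠ b) :
    ∃ x : V, ∀ w, G.Adj w x → ∃ y, G.Adj w y ∧ y ≠ x := by
  by_contra hcon
  push_neg at hcon
  have hall : ∀ x : V, ∃ w, G.Adj w x ∧ ∀ y, G.Adj w y → y = x := by
    intro x
    obtain ⟨w, hw1, hw2⟩ := hcon x
    exact ⟨w, hw1, fun y hy => hw2 y hy⟩
  choose m hm1 hm2 using hall
  have hinj : Function.Injective m := by
    intro x x' h
    exact (hm2 x x' (by rw [h]; exact hm1 x')).symm
  have hsurj : Function.Surjective m := Finite.injective_iff_surjective.mp hinj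
  obtain ⟨x, hx⟩ := hsurj v
  have ha' : a = x := hm2 x a (hx ▸ hva)
  have hb' : b = x := hm2 x b (hx ▸ hvb)
  exact hab (ha'.trans hb'.symm)

end Aux

theorem stmt11 (G : SimpleGraph V) (hni : NoIsolated G) :
    tsrd G = td G ↔ ∀ v, degN G v = 1 := by
  classical
  constructor
  · -- forward direction
    intro heq
    by_contra hcon
    push_neg at hcon
    obtain ⟨v, hv⟩ := hcon
    have hv1 := one_le_degN hni v
    have hv2 : 1 < degN G v := by omega
    obtain ⟨a, b, ha, hb, hab⟩ :=
      (Set.one_lt_ncard_iff (Set.toFinite _)).mp hv2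
    have ha : G.Adj v a := ha
    have hb : G.Adj v b := hb
    -- get an optimal TSRDF f
    obtain ⟨f, hf, hsum0⟩ := Nat.sInf_mem (tsrd_set_nonempty hni)
    have hsum : ∑ w, f w = tsrd G := hsum0
    clear hsum0
    obtain ⟨hf1, hf2, hf3⟩ := hf
    obtain ⟨S, hSmem⟩ : ∃ S : Finset V, ∀ w, w ∈ S ↔ 0 < f w :=
      ⟨Finset.univ.filter (fun w => 0 < f w), fun w => by simp⟩
    have hStds : IsTDS G S := by
      intro w
      rcases Nat.eq_zero_or_pos (f w) with h0 | hpos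
      · obtain ⟨u, hadj, hle⟩ := hf2 w h0
        exact ⟨u, (hSmem u).mpr (by omega), hadj⟩
      · obtain ⟨u, hadj, hupos⟩ := hf3 w hpos
        exact ⟨u, (hSmem u).mpr hupos, hadj⟩
    have hsum_eq : ∑ w, f w = ∑ w ∈ S, f w := by
      rw [← Finset.sum_subset (Finset.subset_univ S)]
      intro w _ hw
      have := (hSmem w).not.mp hw
      omega
    have hcard_le : S.card ≤ ∑ w, f w := by
      rw [hsum_eq]
      calc S.card = ∑ _w ∈ S, 1 := by simp
        _ ≤ ∑ w ∈ S, f w := Finset.sum_le_sum (fun w hw => (hSmem w).mp hw)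
    have htd_le : td G ≤ S.card := td_le_card hStds
    have h1 : ∑ w, f w = td G := by rw [hsum, heq]
    have hcard_eq : S.card = ∑ w, f w := le_antisymm hcard_le (by omega)
    -- each vertex of S has f = 1
    have hone : ∀ w ∈ S, f w = 1 := by
      have heq2 : ∑ _w ∈ S, (1 : ℕ) = ∑ w ∈ S, f w := by
        rw [← hsum_eq, ← hcard_eq]; simp
      have := (Finset.sum_eq_sum_iff_of_le
        (fun w hw => (hSmem w).mp hw)).mp heq2
      intro w hw
      exact (this w hw).symm
    -- no vertex has f = 0
    have hpos : ∀ w, 0 < f w := by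
      intro w
      by_contra h0
      push_neg at h0
      have h0 : f w = 0 := by omega
      obtain ⟨u, hadj, hle⟩ := hf2 w h0
      have hmem : w ∈ {x | G.Adj u x ∧ f x = 0} := ⟨hadj.symm, h0⟩
      have hpos1 : 0 < {x | G.Adj u x ∧ f x = 0}.ncard :=
        (Set.ncard_pos (Set.toFinite _)).mpr ⟨w, hmem⟩
      have huS : u ∈ S := (hSmem u).mpr (by omega)
      have := hone u huS
      omega
    have hSuniv : S = Finset.univ :=
      Finset.eq_univ_iff_forall.mpr (fun w => (hSmem w).mpr (hpos w))
    have htd_card : td G = Fintype.card V := by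
      have h2 : S.card = td G := by omega
      rw [← h2, hSuniv, Finset.card_univ]
    -- construct a TDS of cardinality n - 1
    obtain ⟨x, hx⟩ := exists_droppable ha hb hab
    have hTds' : IsTDS G (Finset.univ.erase x) := by
      intro w
      obtain ⟨u, hu⟩ := hni w
      by_cases hux : u = x
      · obtain ⟨y, hy1, hy2⟩ := hx w (hux ▸ hu)
        exact ⟨y, Finset.mem_erase.mpr ⟨hy2, Finset.mem_univ y⟩, hy1⟩
      · exact ⟨u, Finset.mem_erase.mpr ⟨hux, Finset.mem_univ u⟩, hu⟩
    have hle' : td G ≤ (Finset.univ.erase x).card := td_le_card hTds'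
    have hcard' : (Finset.univ.erase x).card = Fintype.card V - 1 := by
      rw [Finset.card_erase_of_mem (Finset.mem_univ x), Finset.card_univ]
    have hn : 1 ≤ Fintype.card V := Fintype.card_pos_iff.mpr ⟨v⟩
    omega
  · -- backward direction
    intro h1
    have huniv_tds : IsTDS G Finset.univ := by
      intro w
      obtain ⟨u, hu⟩ := hni w
      exact ⟨u, Finset.mem_univ u, hu⟩
    have htds_univ : ∀ S : Finset V, IsTDS G S → S = Finset.univ := by
      intro S hS
      apply Finset.eq_univ_iff_forall.mpr
      intro w
      obtain ⟨u, hu⟩ := hni w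
      obtain ⟨z, hzS, hz⟩ := hS u
      have : z = w := deg_one_unique (h1 u) hz hu.symm
      exact this ▸ hzS
    have htd : td G = Fintype.card V := by
      apply le_antisymm
      · have := td_le_card huniv_tds
        rwa [Finset.card_univ] at this
      · obtain ⟨S, hS, hScard⟩ := Nat.sInf_mem
          (⟨Fintype.card V, Finset.univ, huniv_tds, Finset.card_univ⟩ :
            {k | ∃ S : Finset V, IsTDS G S ∧ S.card = k}.Nonempty)
        have hScard' : S.card = td G := hScard
        rw [← hScard', htds_univ S hS, Finset.card_univ]
    have htsrd : tsrd G = Fintype.card V := by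
      apply le_antisymm
      · calc tsrd G ≤ ∑ _v : V, 1 := Nat.sInf_le ⟨fun _ => 1, tsrdf_one hni, rfl⟩
          _ = Fintype.card V := by simp
      · obtain ⟨f, ⟨_, hf2, hf3⟩, hsum0⟩ := Nat.sInf_mem (tsrd_set_nonempty hni)
        have hsum : ∑ w, f w = tsrd G := hsum0
        clear hsum0
        have hpos : ∀ w, 0 < f w := by
          intro w
          by_contra h0
          push_neg at h0
          have h0 : f w = 0 := by omega
          obtain ⟨u, hadj, hle⟩ := hf2 w h0
          have hmem : w ∈ {x | G.Adj u x ∧ f x = 0} := ⟨hadj.symm, h0⟩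
          have hpos1 : 0 < {x | G.Adj u x ∧ f x = 0}.ncard :=
            (Set.ncard_pos (Set.toFinite _)).mpr ⟨w, hmem⟩
          have hupos : 0 < f u := by omega
          obtain ⟨z, hz1, hz2⟩ := hf3 u hupos
          have : z = w := deg_one_unique (h1 u) hz1 hadj.symm
          rw [this] at hz2
          omega
        calc Fintype.card V = ∑ _v : V, 1 := by simp
          _ ≤ ∑ w, f w := Finset.sum_le_sum (fun w _ => hpos w)
          _ = tsrd G := hsum
    rw [htd, htsrd]
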